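/- For B with finite Haar expansion, the identity π_B* π_B = π_{S_B} + π_{S_B}* + D_B holds, where S_B = Σ_I B_I* B_I χ_I/|I| is the sweep of B and D_B is the block-diagonal operator defined by D_B(h_I ⊗ x) = h_I (1/|I|) Σ_{J⊊I} B_J* B_J x. -/

import Mathlib

open MeasureTheory ENNReal ContinuousLinearMap
open scoped Classical NNReal

noncomputable section

/-- A dyadic subinterval of the unit circle `[0,1)`, given by generation `n`
and position `k < 2 ^ n`; it represents `[k/2^n, (k+1)/2^n)`. -/
structure DyadicInterval where
  n : ℕ
  k : ℕ
  hk : k < 2 ^ n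

namespace DyadicInterval

/-- The underlying set of a dyadic interval. -/
def set (I : DyadicInterval) : Set ℝ :=
  Set.Ico ((I.k : ℝ) / 2 ^ I.n) (((I.k : ℝ) + 1) / 2 ^ I.n)

/-- The length `|I|` of a dyadic interval. -/
def len (I : DyadicInterval) : ℝ := ((2 : ℝ) ^ I.n)⁻¹

/-- The left half `I⁺`. -/
def left (I : DyadicInterval) : DyadicInterval :=
  ⟨I.n + 1, 2 * I.k, by have := I.hk; omega⟩

/-- The right half `I⁻`. -/
def right (I : DyadicInterval) : DyadicInterval :=
  ⟨I.n + 1, 2 * I.k + 1, by have := I.hk; omega⟩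

/-- The indicator function `χ_I`. -/
def ind (I : DyadicInterval) : ℝ → ℝ := Set.indicator I.set fun _ => (1 : ℝ)

/-- The Haar function `h_I = |I|^{-1/2} (χ_{I⁺} - χ_{I⁻})`. -/
def haar (I : DyadicInterval) : ℝ → ℝ :=
  fun t => (Real.sqrt I.len)⁻¹ * (I.left.ind t - I.right.ind t)

end DyadicInterval

/-- Normalized Lebesgue measure on the circle, realized as `[0,1) ⊆ ℝ`. -/
def circleMeasure : Measure ℝ := volume.restrict (Set.Ico (0 : ℝ) 1)

/-- Haar coefficient `f_I = ∫ f h_I`. -/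
def haarCoeff {E : Type*} [NormedAddCommGroup E] [NormedSpace ℝ E]
    (f : ℝ → E) (I : DyadicInterval) : E :=
  ∫ t, I.haar t • f t ∂circleMeasure

/-- Average `m_I f = |I|⁻¹ ∫_I f`. -/
def avg {E : Type*} [NormedAddCommGroup E] [NormedSpace ℝ E]
    (f : ℝ → E) (I : DyadicInterval) : E :=
  I.len⁻¹ • ∫ t in I.set, f t

variable {H : Type*} [NormedAddCommGroup H] [InnerProductSpace ℂ H] [CompleteSpace H]

/-- An operator-valued function with finite formal Haar expansion is recorded by its
finitely supported family of Haar coefficients `B_I ∈ L(H)`. -/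
abbrev OpCoeffs (H : Type*) [NormedAddCommGroup H] [InnerProductSpace ℂ H] :=
  DyadicInterval →₀ (H →L[ℂ] H)

/-- The function `B = ∑_I h_I B_I`. -/
def Bfun (b : OpCoeffs H) : ℝ → (H →L[ℂ] H) :=
  fun t => ∑ I ∈ b.support, I.haar t • b I

/-- The dyadic paraproduct `π_B f = ∑_I B_I (m_I f) h_I`. -/
def para (b : OpCoeffs H) (f : ℝ → H) : ℝ → H :=
  fun t => ∑ I ∈ b.support, I.haar t • (b I) (avg f I)

/-- The operator `Δ_B f = ∑_I B_I (f_I) χ_I / |I|`. -/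
def delta (b : OpCoeffs H) (f : ℝ → H) : ℝ → H :=
  fun t => ∑ I ∈ b.support, (I.len⁻¹ * I.ind t) • (b I) (haarCoeff f I)

/-- The Haar projection `P_I B = ∑_{J ⊆ I} h_J B_J` for `B` with finite Haar expansion. -/
def PIB (b : OpCoeffs H) (I : DyadicInterval) : ℝ → (H →L[ℂ] H) :=
  fun t => ∑ J ∈ b.support.filter fun J => J.set ⊆ I.set, J.haar t • b J

/-- The Haar projection `P_I G = ∑_{J ⊆ I} h_J G_J` for a general operator-valued `G`. -/
def PIBF (G : ℝ → (H →L[ℂ] H)) (I : DyadicInterval) : ℝ → (H →L[ℂ] H) :=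
  fun t => ∑' J : {J : DyadicInterval // J.set ⊆ I.set}, (J : DyadicInterval).haar t • haarCoeff G J

/-- The multiplier `Λ_B f = ∑_I (P_I B)(f_I) h_I`. -/
def Lambda (b : OpCoeffs H) (f : ℝ → H) : ℝ → H :=
  fun t => ∑' I : DyadicInterval, I.haar t • (PIB b I t) (haarCoeff f I)

/-- The multiplier `Λ_G f = ∑_I (P_I G)(f_I) h_I` for a general symbol `G`. -/
def LambdaF (G : ℝ → (H →L[ℂ] H)) (f : ℝ → H) : ℝ → H :=
  fun t => ∑' I : DyadicInterval, I.haar t • (PIBF G I t) (haarCoeff f I)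

/-- The paraproduct `π_G f = ∑_I G_I (m_I f) h_I` for a general symbol `G`. -/
def paraF (G : ℝ → (H →L[ℂ] H)) (f : ℝ → H) : ℝ → H :=
  fun t => ∑' I : DyadicInterval, I.haar t • (haarCoeff G I) (avg f I)

/-- The adjoint `π_G^* f = ∑_I G_I^* (f_I) χ_I/|I|` of the paraproduct with symbol `G`. -/
def paraStarF (G : ℝ → (H →L[ℂ] H)) (f : ℝ → H) : ℝ → H :=
  fun t => ∑' I : DyadicInterval,
    (I.len⁻¹ * I.ind t) • (ContinuousLinearMap.adjoint (haarCoeff G I)) (haarCoeff f I)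

/-- The coefficients of `B^*`, i.e. `I ↦ B_I^*`. -/
def adjC (b : OpCoeffs H) : OpCoeffs H :=
  b.mapRange (fun A => ContinuousLinearMap.adjoint A) (by simp)

/-- The sweep `S_B = ∑_I B_I^* B_I χ_I / |I|`. -/
def sweep (b : OpCoeffs H) : ℝ → (H →L[ℂ] H) :=
  fun t => ∑ I ∈ b.support,
    (I.len⁻¹ * I.ind t) • (ContinuousLinearMap.adjoint (b I) ∘L b I)

/-- The bilinear sweep `Δ(B,F) = ∑_J B_J^* F_J χ_J / |J|`. -/
def DeltaBil (b F : OpCoeffs H) : ℝ → (H →L[ℂ] H) :=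
  fun t => ∑ J ∈ b.support ∪ F.support,
    (J.len⁻¹ * J.ind t) • (ContinuousLinearMap.adjoint (b J) ∘L F J)

/-- The block diagonal operator `D_B (h_I ⊗ x) = h_I |I|⁻¹ ∑_{J ⊊ I} B_J^* B_J x`. -/
def Dop (b : OpCoeffs H) (f : ℝ → H) : ℝ → H :=
  fun t => ∑' I : DyadicInterval, I.haar t •
    (I.len⁻¹ • ∑ J ∈ b.support.filter fun J => J.set ⊂ I.set,
      (ContinuousLinearMap.adjoint (b J) ∘L b J)) (haarCoeff f I)

/-- The block diagonal operator `D_{B,F} (h_I ⊗ x) = h_I |I|⁻¹ ∑_{J ⊊ I} B_J^* F_J x`. -/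
def DopBil (b F : OpCoeffs H) (f : ℝ → H) : ℝ → H :=
  fun t => ∑' I : DyadicInterval, I.haar t •
    (I.len⁻¹ • ∑ J ∈ (b.support ∪ F.support).filter fun J => J.set ⊂ I.set,
      (ContinuousLinearMap.adjoint (b J) ∘L F J)) (haarCoeff f I)

/-- The operator norm of a map on `L²(𝕋, H)`, where `L²(𝕋,H)` is realized as the
(mean-zero) closed span of the Haar system `f = ∑_I f_I h_I`. -/
def l2NormOp (T : (ℝ → H) → (ℝ → H)) : ℝ≥0∞ :=
  ⨆ f : {f : ℝ → H // MemLp f 2 circleMeasure ∧ (∫ t, f t ∂circleMeasure) = 0 ∧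
      eLpNorm f 2 circleMeasure ≤ 1},
    eLpNorm (T f.1) 2 circleMeasure

/-- The Haar multiplier norm of a family `(Φ_I)_{I ∈ D}`, i.e. the norm of
`ℓ²(D,H) → L²(𝕋,H)`, `(f_I) ↦ ∑_I Φ_I (f_I) h_I`. -/
def multNorm (Φ : DyadicInterval → ℝ → (H →L[ℂ] H)) : ℝ≥0∞ :=
  ⨆ c : {c : DyadicInterval →₀ H // ∑ I ∈ c.support, ‖c I‖ ^ 2 ≤ 1},
    eLpNorm (fun t => ∑ I ∈ (c : DyadicInterval →₀ H).support,
      I.haar t • (Φ I t) ((c : DyadicInterval →₀ H) I)) 2 circleMeasure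

/-- The dyadic BMO norm of a vector-valued function. -/
def bmoNorm {E : Type*} [NormedAddCommGroup E] [NormedSpace ℝ E] (f : ℝ → E) : ℝ≥0∞ :=
  ⨆ I : DyadicInterval,
    ENNReal.ofReal (I.len⁻¹ * ∫ t in I.set, ‖f t - avg f I‖ ^ 2) ^ (1/2 : ℝ)

/-- The strong BMO norm `‖B‖_{SBMO} = sup_{‖e‖=1} ‖B e‖_{BMO(H)}`. -/
def sbmoNorm (B : ℝ → (H →L[ℂ] H)) : ℝ≥0∞ :=
  ⨆ e : {e : H // ‖e‖ = 1}, bmoNorm fun t => B t e.1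

/-- The `BMO_so` norm `‖B‖ = ‖B‖_{SBMO} + ‖B^*‖_{SBMO}`. -/
def bmosoNorm (B : ℝ → (H →L[ℂ] H)) : ℝ≥0∞ :=
  sbmoNorm B + sbmoNorm fun t => ContinuousLinearMap.adjoint (B t)

/-- A family of independent fair random signs `(σ_I)_{I ∈ D}`, modelling the product
probability space `Σ = {-1,1}^D`. -/
structure SignSpace {Ω : Type*} [MeasurableSpace Ω] (ℙ : Measure Ω)
    (σ : DyadicInterval → Ω → ℝ) : Prop where
  prob : IsProbabilityMeasure ℙ
  meas : ∀ I, Measurable (σ I)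
  values : ∀ I, ∀ ω, σ I ω = 1 ∨ σ I ω = -1
  indep : ProbabilityTheory.iIndepFun σ ℙ
  fair : ∀ I, ℙ {ω | σ I ω = 1} = 1/2

end


section Aux

namespace DyadicInterval

lemma two_pow_pos (n : ℕ) : (0:ℝ) < 2 ^ n := by positivity

lemma len_pos (I : DyadicInterval) : 0 < I.len := by unfold len; positivity

lemma mem_set_iff {I : DyadicInterval} {t : ℝ} :
    t ∈ I.set ↔ (I.k:ℝ) ≤ t * 2 ^ I.n ∧ t * 2 ^ I.n < (I.k:ℝ) + 1 := by
  simp only [set, Set.mem_Ico, div_le_iff₀ (two_pow_pos I.n), lt_div_iff₀ (two_pow_pos I.n)]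

lemma set_subset_unit (I : DyadicInterval) : I.set ⊆ Set.Ico (0:ℝ) 1 := by
  intro t ht
  rw [mem_set_iff] at ht
  have h2 : (0:ℝ) < 2 ^ I.n := two_pow_pos I.n
  have hk : (I.k:ℝ) + 1 ≤ 2 ^ I.n := by
    have h := I.hk
    exact_mod_cast Nat.succ_le_of_lt h
  have hk0 : (0:ℝ) ≤ (I.k:ℝ) := Nat.cast_nonneg _
  constructor
  · nlinarith [ht.1]
  · nlinarith [ht.2]

lemma subset_iff_nat {I J : DyadicInterval} :
    I.set ⊆ J.set ↔
      (J.k * 2 ^ I.n ≤ I.k * 2 ^ J.n ∧ (I.k + 1) * 2 ^ J.n ≤ (J.k + 1) * 2 ^ I.n) := by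
  unfold set
  rw [Set.Ico_subset_Ico_iff (by
    rw [div_lt_div_iff₀ (two_pow_pos I.n) (two_pow_pos I.n)]
    nlinarith [two_pow_pos I.n])]
  rw [div_le_div_iff₀ (two_pow_pos J.n) (two_pow_pos I.n),
      div_le_div_iff₀ (two_pow_pos I.n) (two_pow_pos J.n)]
  constructor
  · rintro ⟨h1, h2⟩
    exact ⟨by exact_mod_cast h1, by exact_mod_cast h2⟩
  · rintro ⟨h1, h2⟩
    exact ⟨by exact_mod_cast h1, by exact_mod_cast h2⟩

lemma n_le_of_subset {I J : DyadicInterval} (h : I.set ⊆ J.set) : J.n ≤ I.n := by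
  rw [subset_iff_nat] at h
  obtain ⟨h1, h2⟩ := h
  by_contra hn
  push_neg at hn
  have hpow : 2 ^ I.n * 2 ≤ 2 ^ J.n := by
    calc 2 ^ I.n * 2 = 2 ^ (I.n + 1) := by ring
    _ ≤ 2 ^ J.n := Nat.pow_le_pow_right (by norm_num) hn
  have e1 : (I.k + 1) * 2 ^ J.n = I.k * 2 ^ J.n + 2 ^ J.n := by ring
  have e2 : (J.k + 1) * 2 ^ I.n = J.k * 2 ^ I.n + 2 ^ I.n := by ring
  have hp : (0:ℕ) < 2 ^ I.n := Nat.pow_pos (by norm_num)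
  omega

lemma subset_iff {I J : DyadicInterval} :
    I.set ⊆ J.set ↔ J.n ≤ I.n ∧ I.k / 2 ^ (I.n - J.n) = J.k := by
  constructor
  · intro h
    have hn := n_le_of_subset h
    refine ⟨hn, ?_⟩
    rw [subset_iff_nat] at h
    obtain ⟨h1, h2⟩ := h
    have hpow : 2 ^ I.n = 2 ^ J.n * 2 ^ (I.n - J.n) := by
      rw [← pow_add]; congr 1; omega
    have hd : (0:ℕ) < 2 ^ (I.n - J.n) := Nat.pow_pos (by norm_num)
    have hJpos : (0:ℕ) < 2 ^ J.n := Nat.pow_pos (by norm_num)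
    have h1' : J.k * 2 ^ (I.n - J.n) ≤ I.k := by
      refine Nat.le_of_mul_le_mul_right ?_ hJpos
      calc J.k * 2 ^ (I.n - J.n) * 2 ^ J.n = J.k * 2 ^ I.n := by rw [hpow]; ring
      _ ≤ I.k * 2 ^ J.n := h1
    have h2' : I.k + 1 ≤ (J.k + 1) * 2 ^ (I.n - J.n) := by
      refine Nat.le_of_mul_le_mul_right ?_ hJpos
      calc (I.k + 1) * 2 ^ J.n ≤ (J.k + 1) * 2 ^ I.n := h2
      _ = (J.k + 1) * 2 ^ (I.n - J.n) * 2 ^ J.n := by rw [hpow]; ring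
    have hx : J.k ≤ I.k / 2 ^ (I.n - J.n) := (Nat.le_div_iff_mul_le hd).2 h1'
    have hy : I.k / 2 ^ (I.n - J.n) < J.k + 1 := (Nat.div_lt_iff_lt_mul hd).2 (by omega)
    omega
  · rintro ⟨hn, hk⟩
    rw [subset_iff_nat]
    have hpow : 2 ^ I.n = 2 ^ J.n * 2 ^ (I.n - J.n) := by
      rw [← pow_add]; congr 1; omega
    have hd : (0:ℕ) < 2 ^ (I.n - J.n) := Nat.pow_pos (by norm_num)
    have h1' : J.k * 2 ^ (I.n - J.n) ≤ I.k := by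
      rw [← hk]; exact Nat.div_mul_le_self _ _
    have h2' : I.k + 1 ≤ (J.k + 1) * 2 ^ (I.n - J.n) := by
      have hmod := Nat.div_add_mod I.k (2 ^ (I.n - J.n))
      rw [hk] at hmod
      have hm : I.k % 2 ^ (I.n - J.n) < 2 ^ (I.n - J.n) := Nat.mod_lt _ hd
      calc I.k + 1 = 2 ^ (I.n - J.n) * J.k + I.k % 2 ^ (I.n - J.n) + 1 := by omega
      _ ≤ 2 ^ (I.n - J.n) * J.k + 2 ^ (I.n - J.n) := by omega
      _ = (J.k + 1) * 2 ^ (I.n - J.n) := by ring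
    constructor
    · calc J.k * 2 ^ I.n = J.k * 2 ^ (I.n - J.n) * 2 ^ J.n := by rw [hpow]; ring
      _ ≤ I.k * 2 ^ J.n := Nat.mul_le_mul_right _ h1'
    · calc (I.k + 1) * 2 ^ J.n ≤ (J.k + 1) * 2 ^ (I.n - J.n) * 2 ^ J.n :=
        Nat.mul_le_mul_right _ h2'
      _ = (J.k + 1) * 2 ^ I.n := by rw [hpow]; ring

lemma set_injective {I J : DyadicInterval} (h : I.set = J.set) : I = J := by
  have h1 := subset_iff.1 h.subset
  have h2 := subset_iff.1 h.superset
  have hn : I.n = J.n := le_antisymm h2.1 h1.1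
  have hk : I.k = J.k := by
    have hh := h1.2
    rw [hn] at hh
    simpa using hh
  cases I; cases J; simp_all

lemma subset_of_mem_mem {I J : DyadicInterval} (hn : J.n ≤ I.n) {t : ℝ}
    (htI : t ∈ I.set) (htJ : t ∈ J.set) : I.set ⊆ J.set := by
  rw [mem_set_iff] at htI htJ
  rw [subset_iff]
  refine ⟨hn, ?_⟩
  have hpow : (2:ℝ) ^ I.n = 2 ^ J.n * 2 ^ (I.n - J.n) := by
    rw [← pow_add]; congr 1; omega
  have hd : (0:ℝ) < 2 ^ (I.n - J.n) := two_pow_pos _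
  have h1 : ((J.k * 2 ^ (I.n - J.n) : ℕ) : ℝ) < (I.k:ℝ) + 1 := by
    push_cast
    have : (J.k:ℝ) * 2 ^ (I.n - J.n) ≤ t * 2 ^ I.n := by
      rw [hpow]
      calc (J.k:ℝ) * 2 ^ (I.n - J.n) ≤ (t * 2 ^ J.n) * 2 ^ (I.n - J.n) := by nlinarith [htJ.1]
      _ = t * (2 ^ J.n * 2 ^ (I.n - J.n)) := by ring
    linarith [htI.2]
  have h1' : J.k * 2 ^ (I.n - J.n) ≤ I.k := by
    have : J.k * 2 ^ (I.n - J.n) < I.k + 1 := by exact_mod_cast h1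
    omega
  have h2 : (I.k:ℝ) < (((J.k + 1) * 2 ^ (I.n - J.n) : ℕ) : ℝ) := by
    push_cast
    have : t * 2 ^ I.n < ((J.k:ℝ) + 1) * 2 ^ (I.n - J.n) := by
      rw [hpow]
      calc t * (2 ^ J.n * 2 ^ (I.n - J.n)) = (t * 2 ^ J.n) * 2 ^ (I.n - J.n) := by ring
      _ < ((J.k:ℝ) + 1) * 2 ^ (I.n - J.n) := by nlinarith [htJ.2]
    linarith [htI.1]
  have h2' : I.k < (J.k + 1) * 2 ^ (I.n - J.n) := by exact_mod_cast h2
  have hx : J.k ≤ I.k / 2 ^ (I.n - J.n) :=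
    (Nat.le_div_iff_mul_le (Nat.pow_pos (by norm_num))).2 h1'
  have hy : I.k / 2 ^ (I.n - J.n) < J.k + 1 :=
    (Nat.div_lt_iff_lt_mul (Nat.pow_pos (by norm_num))).2 h2'
  omega

lemma ext' {I J : DyadicInterval} (hn : I.n = J.n) (hk : I.k = J.k) : I = J := by
  cases I; cases J; simp_all

lemma left_n (I : DyadicInterval) : I.left.n = I.n + 1 := rfl
lemma right_n (I : DyadicInterval) : I.right.n = I.n + 1 := rfl

lemma set_eq_union (I : DyadicInterval) : I.set = I.left.set ∪ I.right.set := by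
  unfold set left right
  push_cast
  rw [Set.Ico_union_Ico_eq_Ico]
  · have e1 : (2*(I.k:ℝ))/2^(I.n+1) = I.k/2^I.n := by rw [pow_succ]; ring
    have e2 : (2*(I.k:ℝ)+1+1)/2^(I.n+1) = ((I.k:ℝ)+1)/2^I.n := by
      rw [pow_succ]
      field_simp
      ring
    rw [e1, e2]
  · rw [div_le_div_iff₀ (two_pow_pos _) (two_pow_pos _)]; nlinarith [two_pow_pos (I.n+1)]
  · rw [div_le_div_iff₀ (two_pow_pos _) (two_pow_pos _)]; nlinarith [two_pow_pos (I.n+1)]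

lemma disjoint_left_right (I : DyadicInterval) : Disjoint I.left.set I.right.set := by
  unfold set left right
  push_cast
  exact Set.Ico_disjoint_Ico_same

lemma left_subset (I : DyadicInterval) : I.left.set ⊆ I.set := by
  intro t ht; rw [set_eq_union]; exact Set.mem_union_left _ ht

lemma right_subset (I : DyadicInterval) : I.right.set ⊆ I.set := by
  intro t ht; rw [set_eq_union]; exact Set.mem_union_right _ ht

lemma left_len (I : DyadicInterval) : I.left.len = I.len / 2 := by
  unfold len left; simp only; rw [pow_succ]; field_simp

lemma right_len (I : DyadicInterval) : I.right.len = I.len / 2 := by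
  unfold len right; simp only; rw [pow_succ]; field_simp

lemma nonempty_set (I : DyadicInterval) : I.set.Nonempty := by
  refine ⟨(I.k:ℝ) / 2 ^ I.n, ?_⟩
  rw [mem_set_iff]
  rw [div_mul_cancel₀ _ (two_pow_pos I.n).ne']
  constructor <;> simp

lemma ssubset_iff {I J : DyadicInterval} :
    I.set ⊂ J.set ↔ J.n < I.n ∧ I.k / 2 ^ (I.n - J.n) = J.k := by
  rw [ssubset_iff_subset_ne, subset_iff]
  constructor
  · rintro ⟨⟨hn, hk⟩, hne⟩
    rcases lt_or_eq_of_le hn with h | h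
    · exact ⟨h, hk⟩
    · exfalso
      apply hne
      rw [← h] at hk
      simp at hk
      exact congrArg set (ext' h.symm hk)
  · rintro ⟨hn, hk⟩
    refine ⟨⟨hn.le, hk⟩, fun h => ?_⟩
    have := set_injective h
    subst this
    omega

/-- the level-`m` ancestor of `J` (for `m ≤ J.n`). -/
def anc (J : DyadicInterval) (m : ℕ) : DyadicInterval :=
  ⟨min m J.n, J.k / 2 ^ (J.n - min m J.n), by
    have h := J.hk
    have hp : (0:ℕ) < 2 ^ (J.n - min m J.n) := Nat.pow_pos (by norm_num)
    rw [Nat.div_lt_iff_lt_mul hp, ← pow_add]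
    have : min m J.n + (J.n - min m J.n) = J.n := by omega
    rw [this]
    exact h⟩

lemma anc_n {J : DyadicInterval} {m : ℕ} (h : m ≤ J.n) : (anc J m).n = m := by
  simp [anc, min_eq_left h]

lemma anc_k {J : DyadicInterval} {m : ℕ} (h : m ≤ J.n) :
    (anc J m).k = J.k / 2 ^ (J.n - m) := by
  simp [anc, min_eq_left h]

lemma subset_anc {J : DyadicInterval} {m : ℕ} (h : m ≤ J.n) : J.set ⊆ (anc J m).set := by
  rw [subset_iff, anc_n h, anc_k h]
  exact ⟨h, rfl⟩

lemma ssubset_anc {J : DyadicInterval} {m : ℕ} (h : m < J.n) : J.set ⊂ (anc J m).set := by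
  rw [ssubset_iff, anc_n h.le, anc_k h.le]
  exact ⟨h, rfl⟩

lemma eq_anc_of_ssubset {I J : DyadicInterval} (h : J.set ⊂ I.set) :
    I.n < J.n ∧ I = anc J I.n := by
  rw [ssubset_iff] at h
  obtain ⟨hn, hk⟩ := h
  exact ⟨hn, ext' (anc_n hn.le).symm (by rw [anc_k hn.le, hk])⟩

lemma subset_left_or_right {I J : DyadicInterval} (h : I.set ⊂ J.set) :
    I.set ⊆ J.left.set ∨ I.set ⊆ J.right.set := by
  rw [ssubset_iff] at h
  obtain ⟨hn, hk⟩ := h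
  have hn' : J.n + 1 ≤ I.n := hn
  set m := I.k / 2 ^ (I.n - (J.n + 1)) with hm
  have hm2 : m / 2 = J.k := by
    rw [hm, Nat.div_div_eq_div_mul, ← hk]
    congr 1
    rw [← pow_succ]
    congr 1
    omega
  have : m = 2 * J.k ∨ m = 2 * J.k + 1 := by omega
  rcases this with h' | h'
  · left
    rw [subset_iff]
    exact ⟨hn', by simp [left, ← h', ← hm]⟩
  · right
    rw [subset_iff]
    exact ⟨hn', by simp [right, ← h', ← hm]⟩

lemma measurableSet_set (I : DyadicInterval) : MeasurableSet I.set := measurableSet_Ico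

lemma volume_set (I : DyadicInterval) : volume I.set = ENNReal.ofReal I.len := by
  rw [set, Real.volume_Ico]
  congr 1
  unfold len
  field_simp
  ring

lemma volume_set_toReal (I : DyadicInterval) : (volume I.set).toReal = I.len :=
  by rw [volume_set, ENNReal.toReal_ofReal I.len_pos.le]

-- indicator and haar pointwise facts
lemma ind_of_mem {I : DyadicInterval} {t : ℝ} (h : t ∈ I.set) : I.ind t = 1 := by
  simp [ind, Set.indicator_of_mem h]

lemma ind_of_not_mem {I : DyadicInterval} {t : ℝ} (h : t ∉ I.set) : I.ind t = 0 := by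
  simp [ind, Set.indicator_of_notMem h]

lemma haar_of_not_mem {I : DyadicInterval} {t : ℝ} (h : t ∉ I.set) : I.haar t = 0 := by
  unfold haar
  rw [ind_of_not_mem (fun hc => h (I.left_subset hc)),
      ind_of_not_mem (fun hc => h (I.right_subset hc))]
  ring

lemma haar_of_mem_left {I : DyadicInterval} {t : ℝ} (h : t ∈ I.left.set) :
    I.haar t = (Real.sqrt I.len)⁻¹ := by
  unfold haar
  rw [ind_of_mem h, ind_of_not_mem (fun hc => (disjoint_left_right I).le_bot ⟨h, hc⟩)]
  ring

lemma haar_of_mem_right {I : DyadicInterval} {t : ℝ} (h : t ∈ I.right.set) :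
    I.haar t = -(Real.sqrt I.len)⁻¹ := by
  unfold haar
  rw [ind_of_mem h, ind_of_not_mem (fun hc => (disjoint_left_right I).le_bot ⟨hc, h⟩)]
  ring

lemma measurable_ind (I : DyadicInterval) : Measurable I.ind :=
  measurable_const.indicator I.measurableSet_set

lemma measurable_haar (I : DyadicInterval) : Measurable I.haar := by
  unfold haar
  exact (((I.left.measurable_ind).sub (I.right.measurable_ind)).const_mul _)

lemma haar_const_on {I K : DyadicInterval} (h : K.set ⊂ I.set) {s t : ℝ}
    (hs : s ∈ K.set) (ht : t ∈ K.set) : I.haar s = I.haar t := by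
  rcases subset_left_or_right h with h' | h'
  · rw [haar_of_mem_left (h' hs), haar_of_mem_left (h' ht)]
  · rw [haar_of_mem_right (h' hs), haar_of_mem_right (h' ht)]

end DyadicInterval

instance : IsProbabilityMeasure circleMeasure := by
  constructor
  rw [circleMeasure, Measure.restrict_apply_univ, Real.volume_Ico]
  norm_num

section Integrals

open DyadicInterval

variable {E : Type*} [NormedAddCommGroup E] [NormedSpace ℝ E] [CompleteSpace E]

lemma ind_le_one (I : DyadicInterval) (t : ℝ) : ‖I.ind t‖ ≤ 1 := by
  unfold DyadicInterval.ind
  by_cases h : t ∈ I.set <;>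
    simp [Set.indicator_of_mem, Set.indicator_of_notMem, h]

lemma sqrt_len_inv_nonneg (I : DyadicInterval) : 0 ≤ (Real.sqrt I.len)⁻¹ :=
  inv_nonneg.2 (Real.sqrt_nonneg _)

lemma sqrt_len_inv_sq (I : DyadicInterval) :
    (Real.sqrt I.len)⁻¹ * (Real.sqrt I.len)⁻¹ = I.len⁻¹ := by
  rw [← mul_inv, Real.mul_self_sqrt I.len_pos.le]

lemma haar_bound (I : DyadicInterval) (t : ℝ) : ‖I.haar t‖ ≤ (Real.sqrt I.len)⁻¹ := by
  by_cases hl : t ∈ I.left.set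
  · rw [haar_of_mem_left hl, Real.norm_eq_abs, abs_of_nonneg (sqrt_len_inv_nonneg I)]
  by_cases hr : t ∈ I.right.set
  · rw [haar_of_mem_right hr, Real.norm_eq_abs, abs_neg,
      abs_of_nonneg (sqrt_len_inv_nonneg I)]
  · have : t ∉ I.set := by
      rw [set_eq_union]; rintro (h | h) <;> [exact hl h; exact hr h]
    rw [haar_of_not_mem this, norm_zero]
    exact sqrt_len_inv_nonneg I

lemma integrable_ind (I : DyadicInterval) {μ : Measure ℝ} [IsFiniteMeasure μ] :
    Integrable I.ind μ :=
  Integrable.mono' (integrable_const 1) I.measurable_ind.aestronglyMeasurable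
    (ae_of_all _ (ind_le_one I))

lemma integrable_haar (I : DyadicInterval) {μ : Measure ℝ} [IsFiniteMeasure μ] :
    Integrable I.haar μ := by
  unfold DyadicInterval.haar
  exact ((integrable_ind I.left).sub (integrable_ind I.right)).const_mul _

lemma integrable_haar_mul (I J : DyadicInterval) {μ : Measure ℝ} [IsFiniteMeasure μ] :
    Integrable (fun t => I.haar t * J.haar t) μ :=
  (integrable_haar J).bdd_mul (measurable_haar I).aestronglyMeasurable
    (ae_of_all _ (haar_bound I))

lemma integral_ind (I : DyadicInterval) : ∫ t, I.ind t ∂circleMeasure = I.len := by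
  unfold DyadicInterval.ind
  rw [MeasureTheory.integral_indicator_const (1:ℝ) I.measurableSet_set, measureReal_def]
  rw [circleMeasure, Measure.restrict_apply I.measurableSet_set,
    Set.inter_eq_left.2 (set_subset_unit I), volume_set,
    ENNReal.toReal_ofReal I.len_pos.le, smul_eq_mul, mul_one]

lemma integral_haar (I : DyadicInterval) : ∫ t, I.haar t ∂circleMeasure = 0 := by
  unfold DyadicInterval.haar
  rw [MeasureTheory.integral_const_mul,
    integral_sub (integrable_ind _) (integrable_ind _), integral_ind, integral_ind,
    left_len, right_len]
  ring

lemma setIntegral_circle (f : ℝ → E) (I : DyadicInterval) :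
    ∫ t in I.set, f t ∂circleMeasure = ∫ t in I.set, f t := by
  rw [circleMeasure, Measure.restrict_restrict I.measurableSet_set,
    Set.inter_eq_left.2 (set_subset_unit I)]

lemma integrableOn_set {f : ℝ → E} (hf : Integrable f circleMeasure) (I : DyadicInterval) :
    IntegrableOn f I.set volume := by
  have : IntegrableOn f (Set.Ico (0:ℝ) 1) volume := hf
  exact this.mono_set (set_subset_unit I)

lemma ind_smul (I : DyadicInterval) (f : ℝ → E) (t : ℝ) :
    I.ind t • f t = I.set.indicator f t := by
  unfold DyadicInterval.ind
  by_cases h : t ∈ I.set <;>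
    simp [Set.indicator_of_mem, Set.indicator_of_notMem, h]

lemma haarCoeff_eq {f : ℝ → E} (hf : Integrable f circleMeasure) (I : DyadicInterval) :
    haarCoeff f I =
      (Real.sqrt I.len)⁻¹ • ((∫ t in I.left.set, f t) - ∫ t in I.right.set, f t) := by
  unfold haarCoeff DyadicInterval.haar
  have hpt : ∀ t, ((Real.sqrt I.len)⁻¹ * (I.left.ind t - I.right.ind t)) • f t =
      (Real.sqrt I.len)⁻¹ • (I.left.set.indicator f t - I.right.set.indicator f t) := by
    intro t
    rw [mul_smul, sub_smul, ind_smul, ind_smul]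
  simp_rw [hpt]
  rw [integral_smul, integral_sub ((hf.indicator I.left.measurableSet_set))
    ((hf.indicator I.right.measurableSet_set)),
    integral_indicator I.left.measurableSet_set, integral_indicator I.right.measurableSet_set,
    setIntegral_circle, setIntegral_circle]

lemma setIntegral_split {f : ℝ → E} (hf : Integrable f circleMeasure) (I : DyadicInterval) :
    ∫ t in I.set, f t = (∫ t in I.left.set, f t) + ∫ t in I.right.set, f t := by
  rw [set_eq_union]
  simpa using setIntegral_union (disjoint_left_right I) I.right.measurableSet_set
    (integrableOn_set hf I.left) (integrableOn_set hf I.right)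

lemma avg_left_eq {f : ℝ → E} (hf : Integrable f circleMeasure) (I : DyadicInterval) :
    avg f I.left = avg f I + (Real.sqrt I.len)⁻¹ • haarCoeff f I := by
  unfold avg
  rw [haarCoeff_eq hf, setIntegral_split hf I, left_len, smul_smul, sqrt_len_inv_sq,
    (show (I.len/2)⁻¹ = 2 * I.len⁻¹ by rw [inv_div, div_eq_mul_inv])]
  module

lemma avg_right_eq {f : ℝ → E} (hf : Integrable f circleMeasure) (I : DyadicInterval) :
    avg f I.right = avg f I - (Real.sqrt I.len)⁻¹ • haarCoeff f I := by
  unfold avg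
  rw [haarCoeff_eq hf, setIntegral_split hf I, right_len, smul_smul, sqrt_len_inv_sq,
    (show (I.len/2)⁻¹ = 2 * I.len⁻¹ by rw [inv_div, div_eq_mul_inv])]
  module

lemma left_ssubset (I : DyadicInterval) : I.left.set ⊂ I.set := by
  rw [ssubset_iff]
  refine ⟨by simp [left_n], ?_⟩
  show I.left.k / 2 ^ (I.left.n - I.n) = I.k
  simp only [left, left_n]
  have : I.n + 1 - I.n = 1 := by omega
  rw [this]
  omega

lemma right_ssubset (I : DyadicInterval) : I.right.set ⊂ I.set := by
  rw [ssubset_iff]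
  refine ⟨by simp [right_n], ?_⟩
  show I.right.k / 2 ^ (I.right.n - I.n) = I.k
  simp only [right, right_n]
  have : I.n + 1 - I.n = 1 := by omega
  rw [this]
  omega

lemma avg_haar_ssubset {I J : DyadicInterval} (h : J.set ⊂ I.set) {s : ℝ} (hs : s ∈ J.set) :
    avg I.haar J = I.haar s := by
  unfold avg
  rw [setIntegral_congr_fun J.measurableSet_set
    (g := fun _ => I.haar s) (fun t ht => haar_const_on h ht hs)]
  rw [setIntegral_const, measureReal_def, volume_set_toReal, smul_eq_mul, smul_eq_mul, ← mul_assoc,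
    inv_mul_cancel₀ J.len_pos.ne', one_mul]

lemma setIntegral_haar_of_superset {I : DyadicInterval} {s : Set ℝ} (hsub : I.set ⊆ s) :
    ∫ t in s, I.haar t = 0 := by
  rw [setIntegral_eq_integral_of_forall_compl_eq_zero
    (fun x hx => haar_of_not_mem (fun hm => hx (hsub hm)))]
  rw [← setIntegral_eq_integral_of_forall_compl_eq_zero
    (s := Set.Ico (0:ℝ) 1) (fun x hx => haar_of_not_mem (fun hm => hx (set_subset_unit I hm)))]
  have h0 := integral_haar I
  unfold circleMeasure at h0
  exact h0

lemma avg_haar_of_subset {I J : DyadicInterval} (h : I.set ⊆ J.set) : avg I.haar J = 0 := by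
  unfold avg
  rw [setIntegral_haar_of_superset h, smul_zero]

lemma avg_haar_of_disjoint {I J : DyadicInterval} (h : Disjoint I.set J.set) :
    avg I.haar J = 0 := by
  unfold avg
  rw [setIntegral_congr_fun J.measurableSet_set (g := fun _ => (0:ℝ))
    (fun t ht => haar_of_not_mem (fun hm => (Set.disjoint_left.1 h) hm ht))]
  simp

lemma avg_haar_of_not_ssubset {I J : DyadicInterval} (h : ¬ J.set ⊂ I.set) :
    avg I.haar J = 0 := by
  by_cases hd : Disjoint I.set J.set
  · exact avg_haar_of_disjoint hd
  obtain ⟨t, htI, htJ⟩ := Set.not_disjoint_iff.1 hd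
  rcases le_total I.n J.n with hn | hn
  · have hsub : J.set ⊆ I.set := subset_of_mem_mem hn htJ htI
    rcases hsub.ssubset_or_eq with hss | heq
    · exact absurd hss h
    · exact avg_haar_of_subset heq.ge
  · exact avg_haar_of_subset (subset_of_mem_mem hn htI htJ)

lemma avg_haar_left (I : DyadicInterval) : avg I.haar I.left = (Real.sqrt I.len)⁻¹ := by
  obtain ⟨s, hs⟩ := I.left.nonempty_set
  rw [avg_haar_ssubset (left_ssubset I) hs, haar_of_mem_left hs]

lemma avg_haar_right (I : DyadicInterval) : avg I.haar I.right = -(Real.sqrt I.len)⁻¹ := by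
  obtain ⟨s, hs⟩ := I.right.nonempty_set
  rw [avg_haar_ssubset (right_ssubset I) hs, haar_of_mem_right hs]

lemma avg_haar_sq {I J : DyadicInterval} (h : J.set ⊂ I.set) :
    avg I.haar J * avg I.haar J = I.len⁻¹ := by
  obtain ⟨s, hs⟩ := J.nonempty_set
  rcases subset_left_or_right h with h' | h'
  · rw [avg_haar_ssubset h hs, haar_of_mem_left (h' hs), sqrt_len_inv_sq]
  · rw [avg_haar_ssubset h hs, haar_of_mem_right (h' hs), neg_mul_neg, sqrt_len_inv_sq]

lemma avg_haar_chain {I J K : DyadicInterval} (hJI : J.set ⊂ I.set) (hKJ : K.set ⊆ J.set) :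
    avg I.haar K = avg I.haar J := by
  obtain ⟨s, hs⟩ := K.nonempty_set
  rw [avg_haar_ssubset (lt_of_le_of_lt hKJ hJI) hs, avg_haar_ssubset hJI (hKJ hs)]

lemma integral_haar_mul_self (I : DyadicInterval) :
    ∫ t, I.haar t * I.haar t ∂circleMeasure = 1 := by
  have hpt : ∀ t, I.haar t * I.haar t = I.len⁻¹ * (I.left.ind t + I.right.ind t) := by
    intro t
    by_cases hl : t ∈ I.left.set
    · rw [haar_of_mem_left hl, ind_of_mem hl,
        ind_of_not_mem (fun hc => (Set.disjoint_left.1 (disjoint_left_right I)) hl hc),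
        sqrt_len_inv_sq]
      ring
    · by_cases hr : t ∈ I.right.set
      · rw [haar_of_mem_right hr, ind_of_mem hr, ind_of_not_mem hl, neg_mul_neg,
          sqrt_len_inv_sq]
        ring
      · have hni : t ∉ I.set := by
          rw [set_eq_union]; rintro (hc | hc); exacts [hl hc, hr hc]
        rw [haar_of_not_mem hni, ind_of_not_mem hl, ind_of_not_mem hr]; ring
  simp_rw [hpt]
  rw [MeasureTheory.integral_const_mul, integral_add (integrable_ind _) (integrable_ind _),
    integral_ind, integral_ind, left_len, right_len]
  field_simp
  rw [mul_comm, mul_div_assoc, div_self I.len_pos.ne']; norm_num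

lemma integral_haar_mul_of_ssubset {I J : DyadicInterval} (h : J.set ⊂ I.set) :
    ∫ t, I.haar t * J.haar t ∂circleMeasure = 0 := by
  have hpt : ∀ t, I.haar t * J.haar t = avg I.haar J * J.haar t := by
    intro t
    by_cases ht : t ∈ J.set
    · rw [avg_haar_ssubset h ht]
    · rw [haar_of_not_mem ht, mul_zero, mul_zero]
  simp_rw [hpt]
  rw [MeasureTheory.integral_const_mul, integral_haar, mul_zero]

lemma integral_haar_mul (I J : DyadicInterval) :
    ∫ t, I.haar t * J.haar t ∂circleMeasure = if I = J then 1 else 0 := by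
  split_ifs with h
  · subst h; exact integral_haar_mul_self I
  · by_cases hd : Disjoint I.set J.set
    · have hpt : ∀ t, I.haar t * J.haar t = 0 := fun t => by
        by_cases ht : t ∈ I.set
        · rw [haar_of_not_mem (Set.disjoint_left.1 hd ht), mul_zero]
        · rw [haar_of_not_mem ht, zero_mul]
      simp_rw [hpt]
      exact integral_zero _ _
    · obtain ⟨t, htI, htJ⟩ := Set.not_disjoint_iff.1 hd
      rcases le_total I.n J.n with hn | hn
      · have hsub : J.set ⊆ I.set := subset_of_mem_mem hn htJ htI
        rcases hsub.ssubset_or_eq with hss | heq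
        · exact integral_haar_mul_of_ssubset hss
        · exact absurd (set_injective heq) fun hc => h hc.symm
      · have hsub : I.set ⊆ J.set := subset_of_mem_mem hn htI htJ
        rcases hsub.ssubset_or_eq with hss | heq
        · have : ∀ t, I.haar t * J.haar t = J.haar t * I.haar t := fun t => mul_comm _ _
          simp_rw [this]
          exact integral_haar_mul_of_ssubset hss
        · exact absurd (set_injective heq) h

lemma integral_haar_mul_ind (I J : DyadicInterval) :
    ∫ t, I.haar t * J.ind t ∂circleMeasure = J.len * avg I.haar J := by
  have hpt : ∀ t, I.haar t * J.ind t = J.set.indicator I.haar t := fun t => by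
    by_cases ht : t ∈ J.set
    · rw [ind_of_mem ht, Set.indicator_of_mem ht, mul_one]
    · rw [ind_of_not_mem ht, Set.indicator_of_notMem ht, mul_zero]
  simp_rw [hpt]
  rw [integral_indicator J.measurableSet_set, setIntegral_circle]
  unfold avg
  rw [smul_eq_mul, ← mul_assoc, mul_inv_cancel₀ J.len_pos.ne', one_mul]

end Integrals

section Reconstruction

open DyadicInterval

variable {E : Type*} [NormedAddCommGroup E] [NormedSpace ℝ E] [CompleteSpace E]

lemma step_identity {f : ℝ → E} (hf : Integrable f circleMeasure) {P J : DyadicInterval}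
    (hJ : J = P.left ∨ J = P.right) (t : ℝ) :
    (J.len⁻¹ * J.ind t) • avg f J =
      (P.len⁻¹ * P.ind t) • avg f P + ((P.haar t * avg P.haar J) • avg f P
      + ((P.len⁻¹ * P.ind t) * avg P.haar J + P.haar t * P.len⁻¹) • haarCoeff f P) := by
  have hPJ : J.set ⊂ P.set := by
    rcases hJ with rfl | rfl
    exacts [left_ssubset P, right_ssubset P]
  set δ := avg P.haar J with hδdef
  have hδ : δ * δ = P.len⁻¹ := avg_haar_sq hPJ
  have havg : avg f J = avg f P + δ • haarCoeff f P := by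
    rcases hJ with rfl | rfl
    · rw [avg_left_eq hf, hδdef, avg_haar_left]
    · rw [avg_right_eq hf, hδdef, avg_haar_right]
      module
  have hlen : J.len⁻¹ = 2 * P.len⁻¹ := by
    rcases hJ with rfl | rfl
    · rw [left_len, inv_div, div_eq_mul_inv]
    · rw [right_len, inv_div, div_eq_mul_inv]
  by_cases htJ : t ∈ J.set
  · have htP : t ∈ P.set := hPJ.subset htJ
    have hc : P.haar t = δ := (avg_haar_ssubset hPJ htJ).symm
    rw [ind_of_mem htJ, ind_of_mem htP, hc, havg, hlen]
    match_scalars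
    · linear_combination -hδ
    · ring
  · by_cases htP : t ∈ P.set
    · have hc : P.haar t = -δ := by
        rcases hJ with rfl | rfl
        · have hm : t ∈ P.right.set := by
            have := set_eq_union P ▸ htP
            rcases this with h | h
            exacts [absurd h htJ, h]
          rw [haar_of_mem_right hm, hδdef, avg_haar_left]
        · have hm : t ∈ P.left.set := by
            have := set_eq_union P ▸ htP
            rcases this with h | h
            exacts [h, absurd h htJ]
          rw [haar_of_mem_left hm, hδdef, avg_haar_right, neg_neg]
      rw [ind_of_not_mem htJ, ind_of_mem htP, hc, havg, hlen]
      match_scalars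
      · linear_combination hδ
      · ring
    · have hc : P.haar t = 0 := haar_of_not_mem htP
      rw [ind_of_not_mem htJ, ind_of_not_mem htP, hc, havg, hlen]
      match_scalars <;> ring

lemma reconstruction {f : ℝ → E} (hf : Integrable f circleMeasure)
    (hf0 : (∫ t, f t ∂circleMeasure) = 0) {t : ℝ} (ht : t ∈ Set.Ico (0:ℝ) 1) :
    ∀ (n : ℕ) (J : DyadicInterval), J.n = n →
    (J.len⁻¹ * J.ind t) • avg f J =
      ∑ m ∈ Finset.range J.n,
        (((anc J m).haar t * avg (anc J m).haar J) • avg f (anc J m)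
        + ((((anc J m).len⁻¹ * (anc J m).ind t) * avg (anc J m).haar J)
           + (anc J m).haar t * (anc J m).len⁻¹) • haarCoeff f (anc J m)) := by
  intro n
  induction n with
  | zero =>
    intro J hJn
    have hk : J.k = 0 := by
      have h := J.hk
      rw [hJn] at h
      omega
    have hset : J.set = Set.Ico (0:ℝ) 1 := by
      unfold DyadicInterval.set
      rw [hJn, hk]
      norm_num
    have hlen : J.len = 1 := by
      unfold DyadicInterval.len
      rw [hJn]
      norm_num
    rw [hJn, Finset.range_zero, Finset.sum_empty, ind_of_mem (hset.symm ▸ ht)]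
    unfold avg
    rw [hset, hlen]
    have h0 : ∫ u in Set.Ico (0:ℝ) 1, f u = 0 := by
      have := hf0
      unfold circleMeasure at this
      exact this
    rw [h0]
    simp
  | succ n ih =>
    intro J hJn
    have hk2 : J.k / 2 < 2 ^ n := by
      have h := J.hk
      rw [hJn] at h
      have h2 : 2 ^ (n + 1) = 2 * 2 ^ n := by ring
      omega
    obtain ⟨P, hPn, hPk⟩ : ∃ P : DyadicInterval, P.n = n ∧ P.k = J.k / 2 :=
      ⟨⟨n, J.k / 2, hk2⟩, rfl, rfl⟩
    have hJP : J = P.left ∨ J = P.right := by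
      rcases Nat.even_or_odd J.k with he | ho
      · left
        refine ext' ?_ ?_
        · rw [hJn, left_n, hPn]
        · rw [show P.left.k = 2 * P.k from rfl, hPk]
          obtain ⟨c, hc⟩ := he
          omega
      · right
        refine ext' ?_ ?_
        · rw [hJn, right_n, hPn]
        · rw [show P.right.k = 2 * P.k + 1 from rfl, hPk]
          obtain ⟨c, hc⟩ := ho
          omega
    have hnJ : n ≤ J.n := by rw [hJn]; omega
    have hanc_n : anc J n = P := by
      refine ext' ?_ ?_
      · rw [anc_n hnJ, hPn]
      · rw [anc_k hnJ, hPk, hJn]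
        norm_num
    have hanc_m : ∀ m, m < n → anc J m = anc P m := by
      intro m hm
      have hmJ : m ≤ J.n := by rw [hJn]; omega
      have hmP : m ≤ P.n := by rw [hPn]; omega
      refine ext' ?_ ?_
      · rw [anc_n hmJ, anc_n hmP]
      · rw [anc_k hmJ, anc_k hmP, hPk]
        rw [Nat.div_div_eq_div_mul]
        congr 1
        rw [hJn, hPn]
        have he : n + 1 - m = (n - m) + 1 := by omega
        rw [he, pow_succ]
        ring
    have hJsub : J.set ⊆ P.set := by
      rcases hJP with rfl | rfl
      exacts [left_subset P, right_subset P]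
    have hJss : J.set ⊂ P.set := by
      rcases hJP with rfl | rfl
      exacts [left_ssubset P, right_ssubset P]
    rw [hJn, Finset.sum_range_succ, hanc_n]
    have hterm : ∀ m ∈ Finset.range n,
        (((anc J m).haar t * avg (anc J m).haar J) • avg f (anc J m)
        + ((((anc J m).len⁻¹ * (anc J m).ind t) * avg (anc J m).haar J)
           + (anc J m).haar t * (anc J m).len⁻¹) • haarCoeff f (anc J m)) =
        (((anc P m).haar t * avg (anc P m).haar P) • avg f (anc P m)
        + ((((anc P m).len⁻¹ * (anc P m).ind t) * avg (anc P m).haar P)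
           + (anc P m).haar t * (anc P m).len⁻¹) • haarCoeff f (anc P m)) := by
      intro m hm
      rw [Finset.mem_range] at hm
      have hchain : avg (anc P m).haar J = avg (anc P m).haar P :=
        avg_haar_chain (ssubset_anc (by rw [hPn]; exact hm)) hJsub
      rw [hanc_m m hm, hchain]
    have hih := ih P hPn
    rw [hPn] at hih
    rw [Finset.sum_congr rfl hterm, ← hih]
    exact step_identity hf hJP t

end Reconstruction

set_option synthInstance.maxHeartbeats 1000000
set_option maxHeartbeats 1000000

section OpAux

open DyadicInterval

variable {H : Type*} [NormedAddCommGroup H] [InnerProductSpace ℂ H] [CompleteSpace H]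

lemma real_smul_clm (r : ℝ) (A : H →L[ℂ] H) : r • A = (r:ℂ) • A := by
  rw [← smul_one_smul ℂ r A, Complex.real_smul, mul_one]

lemma adjoint_real_smul (r : ℝ) (A : H →L[ℂ] H) :
    ContinuousLinearMap.adjoint (r • A) = r • ContinuousLinearMap.adjoint A := by
  rw [real_smul_clm, real_smul_clm r (ContinuousLinearMap.adjoint A), map_smulₛₗ]
  congr 1
  simp [Complex.conj_ofReal]

lemma adjoint_injective : Function.Injective
    (fun A : H →L[ℂ] H => ContinuousLinearMap.adjoint A) := by
  intro x y h
  have h2 := congrArg (fun A : H →L[ℂ] H => ContinuousLinearMap.adjoint A) h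
  simpa [ContinuousLinearMap.adjoint_adjoint] using h2

lemma support_adjC (b : OpCoeffs H) : (adjC b).support = b.support :=
  Finsupp.support_mapRange_of_injective (by simp) b adjoint_injective

lemma adjC_apply (b : OpCoeffs H) (J : DyadicInterval) :
    adjC b J = ContinuousLinearMap.adjoint (b J) := rfl

lemma haarCoeff_sweep (b : OpCoeffs H) (I : DyadicInterval) :
    haarCoeff (sweep b) I = ∑ J ∈ b.support,
      (avg I.haar J) • (ContinuousLinearMap.adjoint (b J) ∘L (b J)) := by
  unfold haarCoeff sweep
  have hpt : ∀ t, I.haar t • (∑ J ∈ b.support,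
      ((J.len⁻¹ * J.ind t) • (ContinuousLinearMap.adjoint (b J) ∘L (b J)))) =
      ∑ J ∈ b.support, (I.haar t * (J.len⁻¹ * J.ind t)) •
        (ContinuousLinearMap.adjoint (b J) ∘L (b J)) := by
    intro t
    rw [Finset.smul_sum]
    exact Finset.sum_congr rfl fun J _ => smul_smul _ _ _
  simp_rw [hpt]
  have hint : ∀ J ∈ b.support, Integrable (fun t =>
      (I.haar t * (J.len⁻¹ * J.ind t)) •
        (ContinuousLinearMap.adjoint (b J) ∘L (b J))) circleMeasure := by
    intro J _
    exact (((integrable_ind J).const_mul _).bdd_mul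
      (measurable_haar I).aestronglyMeasurable (ae_of_all _ (haar_bound I))).smul_const _
  rw [integral_finset_sum _ hint]
  refine Finset.sum_congr rfl fun J hJ => ?_
  rw [integral_smul_const]
  congr 1
  have hc : ∀ t, I.haar t * (J.len⁻¹ * J.ind t) = J.len⁻¹ * (I.haar t * J.ind t) :=
    fun t => by ring
  simp_rw [hc]
  rw [MeasureTheory.integral_const_mul, integral_haar_mul_ind, ← mul_assoc,
    inv_mul_cancel₀ J.len_pos.ne', one_mul]

lemma haarCoeff_sweep_zero (b : OpCoeffs H) (I : DyadicInterval)
    (h : ∀ J ∈ b.support, ¬ J.set ⊂ I.set) : haarCoeff (sweep b) I = 0 := by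
  rw [haarCoeff_sweep]
  refine Finset.sum_eq_zero fun J hJ => ?_
  rw [avg_haar_of_not_ssubset (h J hJ), zero_smul]

lemma sweep_selfAdjoint (b : OpCoeffs H) (I : DyadicInterval) :
    ContinuousLinearMap.adjoint (haarCoeff (sweep b) I) = haarCoeff (sweep b) I := by
  rw [haarCoeff_sweep, map_sum]
  refine Finset.sum_congr rfl fun J _ => ?_
  rw [adjoint_real_smul, ContinuousLinearMap.adjoint_comp,
    ContinuousLinearMap.adjoint_adjoint]

lemma haarCoeff_para (b : OpCoeffs H) (f : ℝ → H) {J : DyadicInterval}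
    (hJ : J ∈ b.support) : haarCoeff (para b f) J = (b J) (avg f J) := by
  unfold haarCoeff para
  have hpt : ∀ t, J.haar t • (∑ K ∈ b.support, K.haar t • (b K) (avg f K)) =
      ∑ K ∈ b.support, (J.haar t * K.haar t) • (b K) (avg f K) := fun t => by
    rw [Finset.smul_sum]
    exact Finset.sum_congr rfl fun K _ => smul_smul _ _ _
  simp_rw [hpt]
  rw [integral_finset_sum _ (fun K _ => (integrable_haar_mul J K).smul_const _)]
  have hterm : ∀ K ∈ b.support, (∫ t, (J.haar t * K.haar t) • (b K) (avg f K) ∂circleMeasure)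
      = (if J = K then (1:ℝ) else 0) • (b K) (avg f K) := fun K _ => by
    rw [integral_smul_const, integral_haar_mul]
  rw [Finset.sum_congr rfl hterm]
  simp [ite_smul, Finset.sum_ite_eq, hJ]

end OpAux

end Aux

/-- `π_B^* π_B = π_{S_B} + π_{S_B}^* + D_B`. -/
theorem paraAdj_para_eq_sweep_decomposition {H : Type*} [NormedAddCommGroup H] [InnerProductSpace ℂ H] [CompleteSpace H]
    (b : OpCoeffs H) (f : ℝ → H) (hf : MemLp f 2 circleMeasure)
    (hf0 : (∫ t, f t ∂circleMeasure) = 0) :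
    ∀ᵐ t ∂circleMeasure,
      delta (adjC b) (para b f) t =
        paraF (sweep b) f t + paraStarF (sweep b) f t + Dop b f t := by
  classical
  have hfi : Integrable f circleMeasure := hf.integrable one_le_two
  have hae : ∀ᵐ t ∂circleMeasure, t ∈ Set.Ico (0:ℝ) 1 := by
    rw [circleMeasure]
    exact (ae_restrict_iff' measurableSet_Ico).2 (ae_of_all _ fun t ht => ht)
  filter_upwards [hae] with t ht
  set A : DyadicInterval → (H →L[ℂ] H) :=
    fun J => ContinuousLinearMap.adjoint (b J) ∘L (b J) with hA
  set T : Finset DyadicInterval :=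
    b.support.biUnion (fun J => (Finset.range J.n).image (DyadicInterval.anc J)) with hT
  have hmemT : ∀ {I J : DyadicInterval}, J ∈ b.support → J.set ⊂ I.set → I ∈ T := by
    intro I J hJ hss
    obtain ⟨hn, hI⟩ := DyadicInterval.eq_anc_of_ssubset hss
    exact Finset.mem_biUnion.2 ⟨J, hJ, Finset.mem_image.2 ⟨I.n, Finset.mem_range.2 hn, hI.symm⟩⟩
  have hnotT : ∀ I ∉ T, ∀ J ∈ b.support, ¬ J.set ⊂ I.set :=
    fun I hI J hJ hss => hI (hmemT hJ hss)
  -- rewrite the four operators as finite sums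
  have h0 : delta (adjC b) (para b f) t =
      ∑ J ∈ b.support, (J.len⁻¹ * J.ind t) •
        (ContinuousLinearMap.adjoint (b J)) ((b J) (avg f J)) := by
    unfold delta
    rw [support_adjC]
    exact Finset.sum_congr rfl fun J hJ => by rw [adjC_apply, haarCoeff_para b f hJ]
  have h1 : paraF (sweep b) f t =
      ∑ I ∈ T, I.haar t • (haarCoeff (sweep b) I) (avg f I) := by
    unfold paraF
    exact tsum_eq_sum (fun I hI => by
      rw [haarCoeff_sweep_zero b I (hnotT I hI)]; simp)
  have h2 : paraStarF (sweep b) f t =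
      ∑ I ∈ T, (I.len⁻¹ * I.ind t) • (haarCoeff (sweep b) I) (haarCoeff f I) := by
    unfold paraStarF
    rw [tsum_eq_sum (s := T) (fun I hI => by
      rw [haarCoeff_sweep_zero b I (hnotT I hI)]; simp)]
    exact Finset.sum_congr rfl fun I _ => by rw [sweep_selfAdjoint]
  have h3 : Dop b f t =
      ∑ I ∈ T, I.haar t • ((I.len⁻¹ • ∑ J ∈ b.support.filter
        (fun J => J.set ⊂ I.set), A J) (haarCoeff f I)) := by
    unfold Dop
    exact tsum_eq_sum (fun I hI => by
      have he : b.support.filter (fun J => J.set ⊂ I.set) = ∅ :=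
        Finset.filter_eq_empty_iff.2 (by intro J' hJ'; exact hnotT I hI J' hJ')
      rw [he, Finset.sum_empty]
      simp)
  -- expand each term as a sum over J
  have e1 : ∀ I ∈ T, I.haar t • (haarCoeff (sweep b) I) (avg f I) =
      ∑ J ∈ b.support, (I.haar t * avg I.haar J) • (A J) (avg f I) := by
    intro I _
    rw [haarCoeff_sweep, ContinuousLinearMap.sum_apply, Finset.smul_sum]
    exact Finset.sum_congr rfl fun J _ => by
      rw [ContinuousLinearMap.smul_apply, smul_smul]
  have e2 : ∀ I ∈ T, (I.len⁻¹ * I.ind t) • (haarCoeff (sweep b) I) (haarCoeff f I) =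
      ∑ J ∈ b.support, ((I.len⁻¹ * I.ind t) * avg I.haar J) • (A J) (haarCoeff f I) := by
    intro I _
    rw [haarCoeff_sweep, ContinuousLinearMap.sum_apply, Finset.smul_sum]
    exact Finset.sum_congr rfl fun J _ => by
      rw [ContinuousLinearMap.smul_apply, smul_smul]
  have e3 : ∀ I ∈ T, I.haar t • ((I.len⁻¹ • ∑ J ∈ b.support.filter
        (fun J => J.set ⊂ I.set), A J) (haarCoeff f I)) =
      ∑ J ∈ b.support, (if J.set ⊂ I.set then
        (I.haar t * I.len⁻¹) • (A J) (haarCoeff f I) else 0) := by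
    intro I _
    rw [ContinuousLinearMap.smul_apply, ContinuousLinearMap.sum_apply, smul_smul,
      Finset.smul_sum, Finset.sum_filter]
  have e123 : ∀ I ∈ T,
      (I.haar t • (haarCoeff (sweep b) I) (avg f I)
        + (I.len⁻¹ * I.ind t) • (haarCoeff (sweep b) I) (haarCoeff f I))
        + I.haar t • ((I.len⁻¹ • ∑ J ∈ b.support.filter
            (fun J => J.set ⊂ I.set), A J) (haarCoeff f I)) =
      ∑ J ∈ b.support,
        (((I.haar t * avg I.haar J) • (A J) (avg f I)
          + ((I.len⁻¹ * I.ind t) * avg I.haar J) • (A J) (haarCoeff f I))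
        + (if J.set ⊂ I.set then (I.haar t * I.len⁻¹) • (A J) (haarCoeff f I) else 0)) := by
    intro I hI
    rw [e1 I hI, e2 I hI, e3 I hI, ← Finset.sum_add_distrib, ← Finset.sum_add_distrib]
  rw [h0, h1, h2, h3, ← Finset.sum_add_distrib, ← Finset.sum_add_distrib,
    Finset.sum_congr rfl e123, Finset.sum_comm]
  -- now reduce to a per-J identity
  refine Finset.sum_congr rfl fun J hJ => ?_
  have hsubT : (Finset.range J.n).image (DyadicInterval.anc J) ⊆ T :=
    fun I hI => Finset.mem_biUnion.2 ⟨J, hJ, hI⟩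
  have hzero : ∀ I ∈ T, I ∉ (Finset.range J.n).image (DyadicInterval.anc J) →
      (((I.haar t * avg I.haar J) • (A J) (avg f I)
          + ((I.len⁻¹ * I.ind t) * avg I.haar J) • (A J) (haarCoeff f I))
        + (if J.set ⊂ I.set then (I.haar t * I.len⁻¹) • (A J) (haarCoeff f I) else 0)) = 0 := by
    intro I _ hIA
    have hnss : ¬ J.set ⊂ I.set := by
      intro hss
      obtain ⟨hn, hI⟩ := DyadicInterval.eq_anc_of_ssubset hss
      exact hIA (Finset.mem_image.2 ⟨I.n, Finset.mem_range.2 hn, hI.symm⟩)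
    rw [avg_haar_of_not_ssubset hnss, if_neg hnss]
    simp
  rw [← Finset.sum_subset hsubT hzero]
  have hinj : ∀ x ∈ Finset.range J.n, ∀ y ∈ Finset.range J.n,
      DyadicInterval.anc J x = DyadicInterval.anc J y → x = y := by
    intro x hx y hy hxy
    have hcg := congrArg DyadicInterval.n hxy
    rwa [DyadicInterval.anc_n (le_of_lt (Finset.mem_range.1 hx)),
      DyadicInterval.anc_n (le_of_lt (Finset.mem_range.1 hy))] at hcg
  rw [Finset.sum_image hinj]
  have hrec := reconstruction hfi hf0 ht J.n J rfl
  have happ := congrArg (fun x => (A J) x) hrec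
  simp only [map_sum, map_add, ContinuousLinearMap.map_smul_of_tower] at happ
  refine Eq.trans happ ?_
  refine Finset.sum_congr rfl fun m hm => ?_
  rw [if_pos (DyadicInterval.ssubset_anc (Finset.mem_range.1 hm)), add_smul]
  exact (add_assoc _ _ _).symm
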